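/- The ℂ[x,y]-derivation D with D(z₁) = x, D(z₂) = 2yz₁ + 1, D(w) = y^2 on ℂ[x,y,z₁,z₂,w] preserves the ideal (xw - y(yz₁+1), xz₂ - z₁(yz₁+1), z₁w - yz₂) and is locally nilpotent; moreover the induced derivation on the coordinate ring of X₁ has no common zero with the variety X₁, i.e. the induced 𝔾ₐ-action on X₁ is fixed point free. -/
import Mathlib


open MvPolynomial

/-- A derivation `D` is locally nilpotent if every element is annihilated by some
iterate of `D`. -/
def Derivation.IsLocallyNilpotent {R A : Type*} [CommRing R] [CommRing A] [Algebra R A]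
    (D : Derivation R A A) : Prop :=
  ∀ a : A, ∃ n : ℕ, (⇑D)^[n] a = 0

/-- Coordinates on `𝔸⁵`: `x = X 0`, `y = X 1`, `z₁ = X 2`, `z₂ = X 3`, `w = X 4`. -/
noncomputable abbrev R5 : Type := MvPolynomial (Fin 5) ℂ

/-- The `ℂ[x,y]`-derivation `D` with `D z₁ = x`, `D z₂ = 2yz₁ + 1`, `D w = y²`. -/
noncomputable def D4 : Derivation ℂ R5 R5 :=
  MvPolynomial.mkDerivation ℂ
    (fun i => if i = 2 then X 0
              else if i = 3 then 2 * X 1 * X 2 + 1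
              else if i = 4 then (X 1) ^ 2 else 0)

/-- `xw - y(yz₁+1)`. -/
noncomputable def h1 : R5 := X 0 * X 4 - X 1 * (X 1 * X 2 + 1)
/-- `xz₂ - z₁(yz₁+1)`. -/
noncomputable def h2 : R5 := X 0 * X 3 - X 2 * (X 1 * X 2 + 1)
/-- `z₁w - yz₂`. -/
noncomputable def h3 : R5 := X 2 * X 4 - X 1 * X 3

section aux
variable {R A : Type*} [CommRing R] [CommRing A] [Algebra R A] (D : Derivation R A A)

lemma deriv_iter_add (n : ℕ) (a b : A) :
    (⇑D)^[n] (a + b) = (⇑D)^[n] a + (⇑D)^[n] b := by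
  induction n generalizing a b with
  | zero => rfl
  | succ n ih =>
      rw [Function.iterate_succ_apply, Function.iterate_succ_apply,
        Function.iterate_succ_apply, map_add, ih]

lemma deriv_iter_mul : ∀ N (a b : A) (m n : ℕ), m + n ≤ N + 1 →
    (⇑D)^[m] a = 0 → (⇑D)^[n] b = 0 → (⇑D)^[N] (a * b) = 0 := by
  intro N
  induction N with
  | zero =>
      intro a b m n hmn ha hb
      match m, n with
      | 0, _ => simp at ha; simp [ha]
      | _+1, 0 => simp at hb; simp [hb]
      | m+1, n+1 => omega
  | succ N ih =>
      intro a b m n hmn ha hb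
      match m, n with
      | 0, n => simp at ha; simp [ha, Function.iterate_fixed (map_zero D) (N+1)]
      | m, 0 => simp at hb; simp [hb, Function.iterate_fixed (map_zero D) (N+1)]
      | m+1, n+1 =>
          rw [Function.iterate_succ_apply, Derivation.leibniz, smul_eq_mul, smul_eq_mul,
            deriv_iter_add]
          rw [Function.iterate_succ_apply] at ha hb
          rw [ih a (D b) (m+1) n (by omega) (by rwa [Function.iterate_succ_apply]) hb,
            ih b (D a) (n+1) m (by omega) (by rwa [Function.iterate_succ_apply]) ha, add_zero]
end aux

lemma D4_X0 : D4 (X 0) = 0 := by simp [D4, mkDerivation_X]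
lemma D4_X1 : D4 (X 1) = 0 := by simp [D4, mkDerivation_X]
lemma D4_X2 : D4 (X 2) = X 0 := by simp [D4, mkDerivation_X]
lemma D4_X3 : D4 (X 3) = 2 * X 1 * X 2 + 1 := by simp [D4, mkDerivation_X]
lemma D4_X4 : D4 (X 4) = (X 1) ^ 2 := by simp [D4, mkDerivation_X]

lemma D4_h1 : D4 h1 = 0 := by
  simp only [h1, map_sub, Derivation.leibniz, D4_X0, D4_X1, D4_X2, D4_X4,
    map_add, map_mul, Derivation.map_one_eq_zero, smul_eq_mul]
  ring

lemma D4_h2 : D4 h2 = 0 := by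
  simp only [h2, map_sub, Derivation.leibniz, D4_X0, D4_X1, D4_X2, D4_X3,
    map_add, map_mul, Derivation.map_one_eq_zero, smul_eq_mul]
  ring

lemma D4_h3 : D4 h3 = h1 := by
  simp only [h3, h1, map_sub, Derivation.leibniz, D4_X1, D4_X2, D4_X3, D4_X4, smul_eq_mul]
  ring

lemma D4_X_nil (i : Fin 5) : ∃ n, (⇑D4)^[n] (X i : R5) = 0 := by
  fin_cases i
  · exact ⟨1, D4_X0⟩
  · exact ⟨1, D4_X1⟩
  · exact ⟨2, by simp [Function.iterate_succ_apply', D4_X2, D4_X0]⟩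
  · refine ⟨3, ?_⟩
    have htwo : D4 (2 : R5) = 0 := by
      rw [show (2 : R5) = 1 + 1 by norm_num]
      simp
    have h2' : D4 (2 * X 1 * X 2 + 1) = 2 * X 1 * X 0 := by
      simp only [map_add, Derivation.map_one_eq_zero, Derivation.leibniz, D4_X1, D4_X2,
        smul_eq_mul, map_mul, htwo]
      ring
    have h3' : D4 (2 * X 1 * X 0 : R5) = 0 := by
      simp only [Derivation.leibniz, D4_X0, D4_X1, smul_eq_mul, map_mul, htwo]
      ring
    show D4 (D4 (D4 (X 3))) = 0
    rw [D4_X3, h2', h3']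
  · refine ⟨2, ?_⟩
    show D4 (D4 (X 4)) = 0
    rw [D4_X4]
    simp [pow_two, Derivation.leibniz, D4_X1]

/-- The derivation `D` with `D z₁ = x`, `D z₂ = 2yz₁+1`, `D w = y²` preserves the ideal
`(xw - y(yz₁+1), xz₂ - z₁(yz₁+1), z₁w - yz₂)` of `X₁` and is locally nilpotent; moreover
the induced `𝔾ₐ`-action on `X₁` is fixed point free: at no point of `X₁` do the three
images `D z₁ = x`, `D z₂ = 2yz₁+1`, `D w = y²` all vanish. -/
theorem stmt_4 :
    (∀ g ∈ Ideal.span {h1, h2, h3}, D4 g ∈ Ideal.span {h1, h2, h3}) ∧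
    D4.IsLocallyNilpotent ∧
    ∀ P : Fin 5 → ℂ, eval P h1 = 0 → eval P h2 = 0 → eval P h3 = 0 →
      ¬ (eval P (X 0) = 0 ∧ eval P (2 * X 1 * X 2 + 1) = 0 ∧
          eval P ((X 1) ^ 2) = 0) := by
  refine ⟨?_, ?_, ?_⟩
  · intro g hg
    induction hg using Submodule.span_induction with
    | mem g hg =>
        rcases hg with rfl | rfl | rfl
        · rw [D4_h1]; exact zero_mem _
        · rw [D4_h2]; exact zero_mem _
        · rw [D4_h3]
          exact Ideal.subset_span (by simp)
    | zero => simp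
    | add a b _ _ ha hb => rw [map_add]; exact add_mem ha hb
    | smul r x hx hDx =>
        rw [smul_eq_mul, Derivation.leibniz, smul_eq_mul, smul_eq_mul]
        exact add_mem (Ideal.mul_mem_left _ _ hDx) (Ideal.mul_mem_right _ _ hx)
  · intro a
    induction a using MvPolynomial.induction_on with
    | C r =>
        refine ⟨1, ?_⟩
        show D4 (C r) = 0
        rw [show (C r : R5) = algebraMap ℂ R5 r from rfl, Derivation.map_algebraMap]
    | add p q hp hq =>
        obtain ⟨m, hm⟩ := hp
        obtain ⟨n, hn⟩ := hq
        refine ⟨max m n, ?_⟩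
        rw [deriv_iter_add]
        have h0 : ∀ k : ℕ, (⇑D4)^[k] (0 : R5) = 0 :=
          fun k => Function.iterate_fixed (map_zero D4) k
        obtain ⟨k, hk⟩ := Nat.exists_eq_add_of_le (le_max_left m n)
        obtain ⟨l, hl⟩ := Nat.exists_eq_add_of_le (le_max_right m n)
        have A : (⇑D4)^[max m n] p = 0 := by
          rw [hk, Nat.add_comm m k, Function.iterate_add_apply, hm, h0]
        have B : (⇑D4)^[max m n] q = 0 := by
          rw [hl, Nat.add_comm n l, Function.iterate_add_apply, hn, h0]
        rw [A, B, add_zero]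
    | mul_X p i hp =>
        obtain ⟨m, hm⟩ := hp
        obtain ⟨n, hn⟩ := D4_X_nil i
        exact ⟨m + n, deriv_iter_mul D4 (m + n) p (X i) m n (by omega) hm hn⟩
  · rintro P _ _ _ ⟨hx, hyz, hy2⟩
    simp only [eval_pow, eval_X] at hy2
    have hy : P 1 = 0 := by
      exact pow_eq_zero_iff (n := 2) (by norm_num) |>.mp hy2
    simp [hy] at hyz
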